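/- Let F be a connected graph containing arbitrarily long paths all of whose internal vertices have degree 2 in F, and let H be an infinitely connected countably infinite graph containing an infinite clique. Then H contains a spanning copy of F, i.e., there is an embedding of F into H whose image is all of V(H). -/

import Mathlib

open SimpleGraph List

namespace Stmt19

private lemma mem_map_nodup_inj {α β : Type*} {f : α → β} {l : List α}
    (h : (l.map f).Nodup) : ∀ {x y}, x ∈ l → y ∈ l → f x = f y → x = y := by
  induction l with
  | nil => intro x y hx; simp at hx
  | cons a t ih =>
    rw [List.map_cons, List.nodup_cons] at h
    intro x y hx hy hxy
    rcases List.mem_cons.1 hx with rfl | hx' <;> rcases List.mem_cons.1 hy with rfl | hy'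
    · rfl
    · exact absurd (hxy ▸ List.mem_map_of_mem (f := f) hy') h.1
    · exact absurd (hxy ▸ List.mem_map_of_mem (f := f) hx') h.1
    · exact ih h.2 hx' hy' hxy

private lemma support_getElem_eq_getVert {V : Type*} {G : SimpleGraph V} :
    ∀ {u v : V} (p : G.Walk u v) (i : ℕ) (h : i < p.support.length), p.support[i] = p.getVert i
  | _, _, .nil, 0, _ => rfl
  | _, _, .cons h q, 0, _ => rfl
  | _, _, .cons h q, (i+1), hi => by
    simp only [Walk.support_cons, List.getElem_cons_succ, Walk.getVert_cons_succ]
    exact support_getElem_eq_getVert q i (by simpa [Walk.support_cons] using hi)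

private lemma run_extract {V : Type*} [DecidableEq V] {m : ℕ} :
    ∀ (c : ℕ) (S : Finset V) (xs : List V), S.card ≤ c → xs.Nodup →
      (c + 1) * (m + 1) ≤ xs.length →
      ∃ ys : List V, ys <:+: xs ∧ ys.length = m + 1 ∧ ∀ y ∈ ys, y ∉ S := by
  intro c
  induction c with
  | zero =>
    intro S xs hS hnd hlen
    have hm : m + 1 ≤ xs.length := by simpa using hlen
    refine ⟨xs.take (m+1), (xs.take_prefix _).isInfix, by simp; omega, ?_⟩
    have : S = ∅ := Finset.card_eq_zero.1 (Nat.le_zero.1 hS)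
    simp [this]
  | succ c ih =>
    intro S xs hS hnd hlen
    have hexp : (c + 1 + 1) * (m + 1) = (c + 1) * (m + 1) + (m + 1) := by ring
    by_cases hgood : ∀ y ∈ xs.take (m+1), y ∉ S
    · exact ⟨xs.take (m+1), (xs.take_prefix _).isInfix, by simp; omega, hgood⟩
    · push_neg at hgood
      obtain ⟨s, hs_mem, hsS⟩ := hgood
      obtain ⟨ys, hinf, hlen', havoid⟩ := ih (S.erase s) (xs.drop (m+1))
        (by have := Finset.card_erase_of_mem hsS; omega)
        (hnd.sublist (xs.drop_sublist _))
        (by simp only [List.length_drop]; omega)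
      refine ⟨ys, hinf.trans (xs.drop_suffix _).isInfix, hlen', ?_⟩
      intro y hy
      have hyd : y ∈ xs.drop (m+1) := hinf.subset hy
      have hys : y ≠ s := by
        intro rfl'
        exact (List.disjoint_take_drop hnd le_rfl) hs_mem (rfl' ▸ hyd)
      intro hyS
      exact havoid y hy (Finset.mem_erase.2 ⟨hys, hyS⟩)


private lemma exists_fresh {W : Type*} {K : Set W} (hK : K.Infinite) (A : List W) :
    ∃ k ∈ K, k ∉ A := by
  have : (K \ {w | w ∈ A}).Infinite := hK.diff (A.finite_toSet)
  obtain ⟨k, hk⟩ := this.nonempty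
  exact ⟨k, hk.1, hk.2⟩

private lemma exists_path_avoiding {W : Type*} {H : SimpleGraph W}
    (hH : ∀ D : Set W, D.Finite → (H.induce Dᶜ).Connected) (A : List W) {x y : W}
    (hx : x ∉ A) (hy : y ∉ A) :
    ∃ p : H.Walk x y, p.IsPath ∧ ∀ z ∈ p.support, z ∉ A := by
  classical
  have hD : ({w | w ∈ A} : Set W).Finite := A.finite_toSet
  have hconn := hH _ hD
  have hreach := hconn.preconnected ⟨x, hx⟩ ⟨y, hy⟩
  obtain ⟨q⟩ := hreach
  let f := SimpleGraph.Embedding.induce ({w | w ∈ A} : Set W)ᶜ (G := H)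
  let q' := q.map f.toHom
  refine ⟨q'.toPath.1, q'.toPath.2, ?_⟩
  intro z hz
  have hz' : z ∈ (q.map f.toHom).support := q'.support_toPath_subset hz
  rw [Walk.support_map, List.mem_map] at hz'
  obtain ⟨⟨z', hz'mem⟩, _, rfl⟩ := hz'
  exact hz'mem

private lemma exists_bare_path {V : Type*} {F : SimpleGraph V}
    (hpaths : ∀ n : ℕ, ∃ (u v : V) (P : F.Walk u v), P.IsPath ∧ n ≤ P.length ∧
      ∀ x ∈ P.support, x ≠ u → x ≠ v → (F.neighborSet x).encard = 2)
    (A : List V) (m : ℕ) :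
    ∃ xs : List V, xs.length = m + 1 ∧ xs.Nodup ∧ List.Chain' F.Adj xs ∧
      (∀ x ∈ xs, x ∉ A) ∧ (∀ x ∈ xs, (F.neighborSet x).encard = 2) := by
  classical
  obtain ⟨u, v, P, hP, hlen, hdeg⟩ := hpaths ((A.toFinset.card + 3) * (m + 1))
  set S : Finset V := insert u (insert v A.toFinset) with hS
  have hcard : S.card ≤ A.toFinset.card + 2 := by
    calc S.card ≤ (insert v A.toFinset).card + 1 := Finset.card_insert_le _ _
    _ ≤ A.toFinset.card + 2 := by have := Finset.card_insert_le v A.toFinset; omega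
  obtain ⟨ys, hinf, hlen', havoid⟩ := run_extract (m := m) (A.toFinset.card + 2) S P.support
    hcard hP.support_nodup
    (by
      rw [Walk.length_support]
      have : (A.toFinset.card + 2 + 1) * (m + 1) = (A.toFinset.card + 3) * (m+1) := by ring
      omega)
  refine ⟨ys, hlen', hP.support_nodup.sublist hinf.sublist, P.isChain_adj_support.infix hinf, ?_, ?_⟩
  · intro x hx hxA
    exact havoid x hx (by simp [hS, List.mem_toFinset.2 hxA])
  · intro x hx
    have hxS := havoid x hx
    have hxu : x ≠ u := fun h => hxS (by simp [hS, h])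
    have hxv : x ≠ v := fun h => hxS (by simp [hS, h])
    exact hdeg x (hinf.sublist.subset hx) hxu hxv

section D
open SimpleGraph List

variable {V W : Type*} {F : SimpleGraph V} {H : SimpleGraph W} {K : Set W}

structure GoodState (F : SimpleGraph V) (H : SimpleGraph W) (K : Set W)
    (p : List (V × W)) : Prop where
  ndl : (p.map Prod.fst).Nodup
  ndr : (p.map Prod.snd).Nodup
  adj : ∀ ⦃a b c d⦄, (a, b) ∈ p → (c, d) ∈ p → F.Adj a c → H.Adj b d
  cl : ∀ ⦃a b⦄, (a, b) ∈ p → ∀ ⦃c⦄, F.Adj a c → (∀ d, (c, d) ∉ p) → b ∈ K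

private lemma fst_mem_iff {p : List (V × W)} {a : V} :
    a ∈ p.map Prod.fst ↔ ∃ b, (a, b) ∈ p := by
  simp only [List.mem_map]
  constructor
  · rintro ⟨⟨a', b⟩, h, rfl⟩; exact ⟨b, h⟩
  · rintro ⟨b, h⟩; exact ⟨(a, b), h, rfl⟩

private lemma snd_mem_iff {p : List (V × W)} {b : W} :
    b ∈ p.map Prod.snd ↔ ∃ a, (a, b) ∈ p := by
  simp only [List.mem_map]
  constructor
  · rintro ⟨⟨a, b'⟩, h, rfl⟩; exact ⟨a, h⟩
  · rintro ⟨a, h⟩; exact ⟨(a, b), h, rfl⟩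

private lemma step1 (hK : K.Infinite) (hKP : K.Pairwise H.Adj)
    {p : List (V × W)} (hp : GoodState F H K p) (v : V) :
    ∃ q, GoodState F H K q ∧ (∀ x ∈ p, x ∈ q) ∧ ∃ b, (v, b) ∈ q := by
  by_cases hv : ∃ b, (v, b) ∈ p
  · exact ⟨p, hp, fun x h => h, hv⟩
  · push_neg at hv
    obtain ⟨b, hbK, hbA⟩ := exists_fresh hK (p.map Prod.snd)
    refine ⟨(v, b) :: p, ?_, fun x h => List.mem_cons_of_mem _ h, b, List.mem_cons_self⟩
    constructor
    · rw [List.map_cons, List.nodup_cons]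
      exact ⟨fun h => (fst_mem_iff.1 h).elim fun b' hb' => hv b' hb', hp.ndl⟩
    · rw [List.map_cons, List.nodup_cons]
      exact ⟨hbA, hp.ndr⟩
    · intro a b' c d ha hc hadj
      rcases List.mem_cons.1 ha with ha1 | ha2 <;> rcases List.mem_cons.1 hc with hc1 | hc2
      · rw [Prod.mk.injEq] at ha1 hc1
        exact absurd (ha1.1 ▸ hc1.1 ▸ hadj) F.irrefl
      · rw [Prod.mk.injEq] at ha1
        obtain ⟨rfl, rfl⟩ := ha1
        have hdK : d ∈ K := hp.cl hc2 hadj.symm hv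
        have hne : b' ≠ d := fun h => hbA (h ▸ snd_mem_iff.2 ⟨c, hc2⟩)
        exact hKP hbK hdK hne
      · rw [Prod.mk.injEq] at hc1
        obtain ⟨rfl, rfl⟩ := hc1
        have hbK' : b' ∈ K := hp.cl ha2 hadj hv
        have hne : b' ≠ d := fun h => hbA (h ▸ snd_mem_iff.2 ⟨a, ha2⟩)
        exact (hKP hbK hbK' hne.symm).symm
      · exact hp.adj ha2 hc2 hadj
    · intro a b' hab c hadj hcnot
      rcases List.mem_cons.1 hab with hab | hab
      · rw [Prod.mk.injEq] at hab
        exact hab.2 ▸ hbK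
      · exact hp.cl hab hadj fun d hd => hcnot d (List.mem_cons_of_mem _ hd)

private lemma step2 (hK : K.Infinite) (hKP : K.Pairwise H.Adj)
    (hH : ∀ D : Set W, D.Finite → (H.induce Dᶜ).Connected)
    (hpaths : ∀ n : ℕ, ∃ (u v : V) (P : F.Walk u v), P.IsPath ∧ n ≤ P.length ∧
      ∀ x ∈ P.support, x ≠ u → x ≠ v → (F.neighborSet x).encard = 2)
    {p : List (V × W)} (hp : GoodState F H K p) (w : W) :
    ∃ q, GoodState F H K q ∧ (∀ x ∈ p, x ∈ q) ∧ ∃ a, (a, w) ∈ q := by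
  classical
  by_cases hw : ∃ a, (a, w) ∈ p
  · exact ⟨p, hp, fun x h => h, hw⟩
  push_neg at hw
  have hwran : w ∉ p.map Prod.snd := fun h => (snd_mem_iff.1 h).elim fun a ha => hw a ha
  -- choose k1 and a path Q from k1 to w avoiding the range of p
  obtain ⟨k1, hk1K, hk1⟩ := exists_fresh hK (w :: p.map Prod.snd)
  have hk1w : k1 ≠ w := fun h => hk1 (h ▸ List.mem_cons_self)
  have hk1r : k1 ∉ p.map Prod.snd := fun h => hk1 (List.mem_cons_of_mem _ h)
  obtain ⟨Q, hQp, hQav⟩ := exists_path_avoiding hH (p.map Prod.snd) hk1r hwran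
  -- choose k2 and a path R from w to k2 avoiding the range of p and Q (except w)
  obtain ⟨k2, hk2K, hk2⟩ := exists_fresh hK (p.map Prod.snd ++ Q.support)
  have hk2r : k2 ∉ p.map Prod.snd := fun h => hk2 (List.mem_append_left _ h)
  have hk2Q : k2 ∉ Q.support := fun h => hk2 (List.mem_append_right _ h)
  have hwA2 : w ∉ p.map Prod.snd ++ Q.support.erase w := by
    intro h
    rcases List.mem_append.1 h with h | h
    · exact hwran h
    · exact hQp.support_nodup.not_mem_erase h
  have hk2A2 : k2 ∉ p.map Prod.snd ++ Q.support.erase w := by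
    intro h
    rcases List.mem_append.1 h with h | h
    · exact hk2r h
    · exact hk2Q ((Q.support.erase_sublist).subset h)
  obtain ⟨R, hRp, hRav⟩ := exists_path_avoiding hH (p.map Prod.snd ++ Q.support.erase w) hwA2 hk2A2
  have hRavr : ∀ z ∈ R.support, z ∉ p.map Prod.snd := fun z hz h =>
    hRav z hz (List.mem_append_left _ h)
  have hRavQ : ∀ z ∈ R.support, z ≠ w → z ∉ Q.support := fun z hz hzw h =>
    hRav z hz (List.mem_append_right _ (List.mem_erase_of_ne hzw |>.2 h))
  have hk2w : k2 ≠ w := fun h => hk2Q (h ▸ Q.end_mem_support)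
  -- the combined walk
  have hQlen : 1 ≤ Q.length := by
    rcases Nat.eq_zero_or_pos Q.length with h | h
    · exact absurd (SimpleGraph.Walk.eq_of_length_eq_zero h) hk1w
    · exact h
  have hRlen : 1 ≤ R.length := by
    rcases Nat.eq_zero_or_pos R.length with h | h
    · exact absurd (SimpleGraph.Walk.eq_of_length_eq_zero h) (fun hh => hk2w hh.symm)
    · exact h
  obtain ⟨n, hneq⟩ : ∃ n, n = (Q.append R).length := ⟨_, rfl⟩
  obtain ⟨zs, hzseq⟩ : ∃ zs, zs = (Q.append R).support := ⟨_, rfl⟩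
  have hnQR : n = Q.length + R.length := by
    rw [hneq]; exact SimpleGraph.Walk.length_append _ _
  have hn2 : 2 ≤ n := by omega
  have hzslen : zs.length = n + 1 := by
    rw [hzseq, SimpleGraph.Walk.length_support, hneq]
  have hwR : w ∉ R.support.tail := by
    have := hRp.support_nodup
    rw [R.support_eq_cons] at this
    exact (List.nodup_cons.1 this).1
  have hzsapp : zs = Q.support ++ R.support.tail := by
    rw [hzseq]; exact SimpleGraph.Walk.support_append _ _
  have hznd : zs.Nodup := by
    rw [hzsapp, List.nodup_append]
    refine ⟨hQp.support_nodup, hRp.support_nodup.sublist (List.tail_sublist _), ?_⟩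
    intro z hzQ y hzt hzy
    subst hzy
    have hzR : z ∈ R.support := List.mem_of_mem_tail hzt
    have hzw : z ≠ w := fun h => hwR (h ▸ hzt)
    exact hRavQ z hzR hzw hzQ
  have hzav : ∀ z ∈ zs, z ∉ p.map Prod.snd := by
    intro z hz
    rw [hzsapp] at hz
    rcases List.mem_append.1 hz with h | h
    · exact hQav z h
    · exact hRavr z (List.mem_of_mem_tail h)
  have hwzs : w ∈ zs := by
    rw [hzsapp]
    exact List.mem_append_left _ Q.end_mem_support
  have hz0 : ∀ (h : 0 < zs.length), zs[0] = k1 := by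
    intro h
    rw [List.getElem_of_eq hzseq h]
    exact (support_getElem_eq_getVert _ 0 _).trans ((Q.append R).getVert_zero)
  have hzn : ∀ (h : n < zs.length), zs[n] = k2 := by
    intro h
    rw [List.getElem_of_eq hzseq h]
    rw [support_getElem_eq_getVert _ n _, hneq]
    exact (Q.append R).getVert_length
  have hzadj : ∀ i (h1 : i < n) , H.Adj (zs[i]'(by omega)) (zs[i+1]'(by omega)) := by
    intro i h1
    rw [List.getElem_of_eq hzseq (by omega), List.getElem_of_eq hzseq (by omega)]
    rw [support_getElem_eq_getVert _ i _, support_getElem_eq_getVert _ (i+1) _]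
    exact (Q.append R).adj_getVert_succ (by omega)
  -- the bare path in F
  obtain ⟨xs, hxslen, hxsnd, hxsch, hxsav, hxsdeg⟩ := exists_bare_path hpaths (p.map Prod.fst) n
  have hxadj : ∀ i (h1 : i < n), F.Adj (xs[i]'(by omega)) (xs[i+1]'(by omega)) := by
    intro i h1
    have := List.isChain_iff_getElem.1 hxsch i (by omega)
    simpa [List.get_eq_getElem] using this
  have hxinj : ∀ i j (hi : i < xs.length) (hj : j < xs.length),
      xs[i] = xs[j] → i = j := fun i j hi hj he => (hxsnd.getElem_inj_iff.1 he)
  -- neighbours of interior vertices of xs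
  have nbr_eq : ∀ i (h0 : 0 < i) (h1 : i < n),
      F.neighborSet (xs[i]'(by omega)) = {xs[i-1]'(by omega), xs[i+1]'(by omega)} := by
    intro i h0 h1
    have hfin : (F.neighborSet (xs[i]'(by omega))).Finite :=
      Set.finite_of_encard_eq_coe (k := 2) (by
        rw [hxsdeg _ (List.getElem_mem _)]; rfl)
    have hab : (xs[i-1]'(by omega)) ≠ (xs[i+1]'(by omega)) := by
      intro h
      have := hxinj _ _ (by omega) (by omega) h
      omega
    have hsub : ({xs[i-1]'(by omega), xs[i+1]'(by omega)} : Set V) ⊆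
        F.neighborSet (xs[i]'(by omega)) := by
      rintro x (rfl | rfl)
      · have := hxadj (i-1) (by omega)
        have h2 : i - 1 + 1 = i := by omega
        rw [SimpleGraph.mem_neighborSet]
        exact (by simpa [h2] using this : F.Adj _ (xs[i]'(by omega))).symm
      · rw [SimpleGraph.mem_neighborSet]
        exact hxadj i h1
    refine (hfin.eq_of_subset_of_encard_le' hsub ?_).symm
    rw [hxsdeg _ (List.getElem_mem _), Set.encard_pair hab]
  -- the new pairs
  obtain ⟨nl, hnl⟩ : ∃ nl : List (V × W), nl = xs.zip zs := ⟨_, rfl⟩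
  have hnllen : nl.length = n + 1 := by
    rw [hnl, List.length_zip, hxslen, hzslen]; omega
  have hnlget : ∀ i (h : i < n + 1), nl[i]'(by omega) = ((xs[i]'(by omega)), (zs[i]'(by omega))) := by
    intro i h
    rw [List.getElem_of_eq hnl (by omega)]
    exact List.getElem_zip ..
  have mem_nl : ∀ {a : V} {b : W}, (a, b) ∈ nl ↔
      ∃ i, ∃ (h : i < n + 1), a = xs[i]'(by omega) ∧ b = zs[i]'(by omega) := by
    intro a b
    rw [List.mem_iff_getElem]
    constructor
    · rintro ⟨i, hi, he⟩
      refine ⟨i, by omega, ?_⟩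
      rw [hnlget i (by omega)] at he
      exact ⟨(Prod.mk.injEq .. ▸ he).1.symm, (Prod.mk.injEq .. ▸ he).2.symm⟩
    · rintro ⟨i, hi, he1, he2⟩
      exact ⟨i, by omega, by rw [hnlget i hi, he1, he2]⟩
  have hmapfst : nl.map Prod.fst = xs := by
    rw [hnl]; exact List.map_fst_zip (by omega)
  have hmapsnd : nl.map Prod.snd = zs := by
    rw [hnl]; exact List.map_snd_zip (by omega)
  -- key adjacency claims
  have hk1k2 : k1 ≠ k2 := fun h => hk2Q (h ▸ Q.start_mem_support)
  have key_adj : ∀ i j (hi : i < n + 1) (hj : j < n + 1),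
      F.Adj (xs[i]'(by omega)) (xs[j]'(by omega)) → H.Adj (zs[i]'(by omega)) (zs[j]'(by omega)) := by
    intro i j hi hj hadj
    have hij : i ≠ j := by
      intro h
      subst h
      exact F.irrefl hadj
    by_cases hj1 : j = i + 1
    · subst hj1; exact hzadj i (by omega)
    by_cases hi1 : i = j + 1
    · subst hi1; exact (hzadj j (by omega)).symm
    have hiend : i = 0 ∨ i = n := by
      by_contra hcon
      push_neg at hcon
      have h0 : 0 < i := Nat.pos_of_ne_zero hcon.1
      have h1 : i < n := by omega
      have hmem : (xs[j]'(by omega)) ∈ F.neighborSet (xs[i]'(by omega)) := hadj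
      rw [nbr_eq i h0 h1] at hmem
      rcases hmem with h | h
      · exact hi1 (by have := hxinj _ _ (by omega) (by omega) h; omega)
      · exact hj1 (hxinj _ _ (by omega) (by omega) h)
    have hjend : j = 0 ∨ j = n := by
      by_contra hcon
      push_neg at hcon
      have h0 : 0 < j := Nat.pos_of_ne_zero hcon.1
      have h1 : j < n := by omega
      have hmem : (xs[i]'(by omega)) ∈ F.neighborSet (xs[j]'(by omega)) := hadj.symm
      rw [nbr_eq j h0 h1] at hmem
      rcases hmem with h | h
      · exact hj1 (by have := hxinj _ _ (by omega) (by omega) h; omega)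
      · exact hi1 (hxinj _ _ (by omega) (by omega) h)
    rcases hiend with rfl | rfl <;> rcases hjend with rfl | rfl
    · exact absurd rfl hij
    · rw [hz0 (by omega), hzn (by omega)]
      exact hKP hk1K hk2K hk1k2
    · rw [hz0 (by omega), hzn (by omega)]
      exact (hKP hk1K hk2K hk1k2).symm
    · exact absurd rfl hij
  have key_cross : ∀ i (hi : i < n + 1) (c : V) (d : W), (c, d) ∈ p →
      F.Adj (xs[i]'(by omega)) c → H.Adj (zs[i]'(by omega)) d := by
    intro i hi c d hcd hadj
    have hcdom : c ∈ p.map Prod.fst := fst_mem_iff.2 ⟨d, hcd⟩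
    by_cases hiend : i = 0 ∨ i = n
    · have hzK : (zs[i]'(by omega)) ∈ K := by
        rcases hiend with rfl | rfl
        · rw [hz0 (by omega)]; exact hk1K
        · rw [hzn (by omega)]; exact hk2K
      have hnotin : ∀ d', ((xs[i]'(by omega)), d') ∉ p := by
        intro d' hd'
        exact hxsav _ (List.getElem_mem _) (fst_mem_iff.2 ⟨d', hd'⟩)
      have hdK : d ∈ K := hp.cl hcd hadj.symm hnotin
      have hne : (zs[i]'(by omega)) ≠ d := by
        intro h
        exact hzav _ (List.getElem_mem _) (h ▸ snd_mem_iff.2 ⟨c, hcd⟩)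
      exact hKP hzK hdK hne
    · push_neg at hiend
      have h0 : 0 < i := Nat.pos_of_ne_zero hiend.1
      have h1 : i < n := by omega
      have hmem : c ∈ F.neighborSet (xs[i]'(by omega)) := hadj
      rw [nbr_eq i h0 h1] at hmem
      rcases hmem with rfl | rfl
      · exact absurd hcdom (hxsav _ (List.getElem_mem _))
      · exact absurd hcdom (hxsav _ (List.getElem_mem _))
  -- assemble
  refine ⟨nl ++ p, ⟨?_, ?_, ?_, ?_⟩, fun x h => List.mem_append_right _ h, ?_⟩
  · rw [List.map_append, hmapfst, List.nodup_append]
    exact ⟨hxsnd, hp.ndl, fun x hx y hy hxy => hxsav x hx (hxy ▸ hy)⟩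
  · rw [List.map_append, hmapsnd, List.nodup_append]
    exact ⟨hznd, hp.ndr, fun z hz y hy hzy => hzav z hz (hzy ▸ hy)⟩
  · intro a b c d ha hc hadj
    rcases List.mem_append.1 ha with ha1 | ha2 <;> rcases List.mem_append.1 hc with hc1 | hc2
    · obtain ⟨i, hi, rfl, rfl⟩ := mem_nl.1 ha1
      obtain ⟨j, hj, rfl, rfl⟩ := mem_nl.1 hc1
      exact key_adj i j hi hj hadj
    · obtain ⟨i, hi, rfl, rfl⟩ := mem_nl.1 ha1
      exact key_cross i hi c d hc2 hadj
    · obtain ⟨j, hj, rfl, rfl⟩ := mem_nl.1 hc1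
      exact (key_cross j hj a b ha2 hadj.symm).symm
    · exact hp.adj ha2 hc2 hadj
  · intro a b hab c hadj hnot
    rcases List.mem_append.1 hab with hab1 | hab2
    · obtain ⟨i, hi, rfl, rfl⟩ := mem_nl.1 hab1
      by_cases hiend : i = 0 ∨ i = n
      · rcases hiend with rfl | rfl
        · rw [hz0 (by omega)]; exact hk1K
        · rw [hzn (by omega)]; exact hk2K
      · push_neg at hiend
        have h0 : 0 < i := Nat.pos_of_ne_zero hiend.1
        have h1 : i < n := by omega
        have hmem : c ∈ F.neighborSet (xs[i]'(by omega)) := hadj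
        rw [nbr_eq i h0 h1] at hmem
        exfalso
        rcases hmem with rfl | rfl
        · exact hnot _ (List.mem_append_left _ (mem_nl.2 ⟨i-1, by omega, rfl, rfl⟩))
        · exact hnot _ (List.mem_append_left _ (mem_nl.2 ⟨i+1, by omega, rfl, rfl⟩))
    · exact hp.cl hab2 hadj fun d hd => hnot d (List.mem_append_right _ hd)
  · obtain ⟨iw, hiw, hiweq⟩ := List.mem_iff_getElem.1 hwzs
    refine ⟨xs[iw]'(by omega), List.mem_append_left _ (mem_nl.2 ⟨iw, by omega, rfl, ?_⟩)⟩
    rw [hiweq]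

end D

end Stmt19

theorem stmt_19 {V W : Type*} [Countable V] [Infinite V] [Countable W] [Infinite W]
    (F : SimpleGraph V) (hconn : F.Connected)
    (hpaths : ∀ n : ℕ, ∃ (u v : V) (P : F.Walk u v), P.IsPath ∧ n ≤ P.length ∧
      ∀ x ∈ P.support, x ≠ u → x ≠ v → (F.neighborSet x).encard = 2)
    (H : SimpleGraph W)
    (hH : ∀ D : Set W, D.Finite → (H.induce Dᶜ).Connected)
    (hclique : ∃ K : Set W, K.Infinite ∧ K.Pairwise H.Adj) :
    ∃ f : V → W, Function.Injective f ∧ Function.Surjective f ∧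
      ∀ u v : V, F.Adj u v → H.Adj (f u) (f v) := by
  classical
  obtain ⟨K, hK, hKP⟩ := hclique
  obtain ⟨dV⟩ := nonempty_denumerable V
  obtain ⟨dW⟩ := nonempty_denumerable W
  let eV : ℕ ≃ V := (Denumerable.eqv V).symm
  let eW : ℕ ≃ W := (Denumerable.eqv W).symm
  have good0 : Stmt19.GoodState F H K [] := by
    refine ⟨?_, ?_, ?_, ?_⟩ <;> simp
  have key : ∀ p, Stmt19.GoodState F H K p → ∀ (v : V) (w : W),
      ∃ q, Stmt19.GoodState F H K q ∧ (∀ x ∈ p, x ∈ q) ∧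
        (∃ b, (v, b) ∈ q) ∧ (∃ a, (a, w) ∈ q) := by
    intro p hp v w
    obtain ⟨q1, hq1, hsub1, b, hb⟩ := Stmt19.step1 hK hKP hp v
    obtain ⟨q2, hq2, hsub2, ha⟩ := Stmt19.step2 hK hKP hH hpaths hq1 w
    exact ⟨q2, hq2, fun x hx => hsub2 x (hsub1 x hx), ⟨b, hsub2 _ hb⟩, ha⟩
  let T := {l : List (V × W) // Stmt19.GoodState F H K l}
  let step : T → ℕ → T := fun s i =>
    ⟨(key s.1 s.2 (eV i) (eW i)).choose, (key s.1 s.2 (eV i) (eW i)).choose_spec.1⟩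
  let seq : ℕ → T := fun i => Nat.rec ⟨[], good0⟩ (fun i s => step s i) i
  have hstep_spec : ∀ (s : T) (i : ℕ), (∀ x ∈ s.1, x ∈ (step s i).1) ∧
      (∃ b, (eV i, b) ∈ (step s i).1) ∧ (∃ a, (a, eW i) ∈ (step s i).1) := fun s i =>
    (key s.1 s.2 (eV i) (eW i)).choose_spec.2
  have hmono : ∀ i j, i ≤ j → ∀ x ∈ (seq i).1, x ∈ (seq j).1 := by
    intro i j hij x hx
    induction hij with
    | refl => exact hx
    | step _ ih => exact (hstep_spec _ _).1 x ih
  have cover_v : ∀ v : V, ∃ b, (v, b) ∈ (seq (eV.symm v + 1)).1 := by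
    intro v
    have h := (hstep_spec (seq (eV.symm v)) (eV.symm v)).2.1
    rw [eV.apply_symm_apply] at h
    exact h
  have cover_w : ∀ w : W, ∃ a, (a, w) ∈ (seq (eW.symm w + 1)).1 := by
    intro w
    have h := (hstep_spec (seq (eW.symm w)) (eW.symm w)).2.2
    rw [eW.apply_symm_apply] at h
    exact h
  let f : V → W := fun v => (cover_v v).choose
  have hf : ∀ v, (v, f v) ∈ (seq (eV.symm v + 1)).1 := fun v => (cover_v v).choose_spec
  have huniq : ∀ {m : ℕ} {v b}, (v, b) ∈ (seq m).1 → b = f v := by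
    intro m v b hb
    have h1 : (v, b) ∈ (seq (max m (eV.symm v + 1))).1 :=
      hmono _ _ (le_max_left _ _) _ hb
    have h2 : (v, f v) ∈ (seq (max m (eV.symm v + 1))).1 :=
      hmono _ _ (le_max_right _ _) _ (hf v)
    have := Stmt19.mem_map_nodup_inj ((seq (max m (eV.symm v + 1))).2.ndl) h1 h2 rfl
    exact congrArg Prod.snd this
  refine ⟨f, ?_, ?_, ?_⟩
  · intro u v huv
    have h1 : (u, f u) ∈ (seq (max (eV.symm u + 1) (eV.symm v + 1))).1 :=
      hmono _ _ (le_max_left _ _) _ (hf u)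
    have h2 : (v, f u) ∈ (seq (max (eV.symm u + 1) (eV.symm v + 1))).1 := by
      rw [huv]
      exact hmono _ _ (le_max_right _ _) _ (hf v)
    have := Stmt19.mem_map_nodup_inj
      ((seq (max (eV.symm u + 1) (eV.symm v + 1))).2.ndr) h1 h2 rfl
    exact congrArg Prod.fst this
  · intro w
    obtain ⟨a, ha⟩ := cover_w w
    exact ⟨a, (huniq (m := eW.symm w + 1) ha).symm⟩
  · intro u v huv
    have h1 : (u, f u) ∈ (seq (max (eV.symm u + 1) (eV.symm v + 1))).1 :=
      hmono _ _ (le_max_left _ _) _ (hf u)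
    have h2 : (v, f v) ∈ (seq (max (eV.symm u + 1) (eV.symm v + 1))).1 :=
      hmono _ _ (le_max_right _ _) _ (hf v)
    exact (seq (max (eV.symm u + 1) (eV.symm v + 1))).2.adj h1 h2 huv
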